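/- If a string X of length n has a d-period ρ (i.e., HAM(X[0 .. n-ρ-1], X[ρ .. n-1]) ≤ d), then Σ_{c ∈ Σ} |supp(Δ_ρ[X_c])| ≤ 2(d + ρ), where Δ_ρ[f](i) = f(i) - f(i-ρ) is the backward difference. -/

import Mathlib

open Function

/-- Hamming distance between (prefixes of) lists: number of aligned mismatches. -/
def hamL {α : Type*} [DecidableEq α] (A B : List α) : ℕ :=
  ((List.range A.length).filter (fun i => A[i]? ≠ B[i]?)).length

/-- Substring T[a .. b] (inclusive) with integer indices. -/
def substr {α : Type*} (T : List α) (a b : ℤ) : List α :=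
  (T.drop a.toNat).take (b - a + 1).toNat

/-- Characteristic function of a string and a character. -/
def charFn {α : Type*} [DecidableEq α] (X : List α) (c : α) : ℤ → ℤ :=
  fun i => if 0 ≤ i ∧ X[i.toNat]? = some c then 1 else 0

/-- Convolution of two (finitely supported) functions ℤ → ℤ. -/
noncomputable def conv (f g : ℤ → ℤ) : ℤ → ℤ := fun i => ∑ᶠ j : ℤ, f j * g (i - j)

/-- Cross-correlation of two strings. -/
noncomputable def cross {α : Type*} [Fintype α] [DecidableEq α] (X Y : List α) : ℤ → ℤ :=
  fun i => ∑ c : α, conv (charFn X c) (charFn Y.reverse c) i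

/-- Backward difference of `f` due to `ρ`. -/
def bdiff (ρ : ℤ) (f : ℤ → ℤ) : ℤ → ℤ := fun i => f i - f (i - ρ)

/-- `ρ` is a `d`-period of `X`: HAM(X[0..n-ρ-1], X[ρ..n-1]) ≤ d. -/
def isPeriodL {α : Type*} [DecidableEq α] (X : List α) (ρ d : ℕ) : Prop :=
  hamL (X.take (X.length - ρ)) (X.drop ρ) ≤ d

lemma charFn_ne_iff {α : Type*} [DecidableEq α] (X : List α) (c : α) (i : ℤ) :
    charFn X c i ≠ 0 ↔ 0 ≤ i ∧ X[i.toNat]? = some c := by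
  unfold charFn
  split <;> simp_all

lemma charFn_eq_zero {α : Type*} [DecidableEq α] (X : List α) (c : α) (i : ℤ)
    (h : i < 0 ∨ (X.length : ℤ) ≤ i) : charFn X c i = 0 := by
  unfold charFn
  rw [if_neg]
  rintro ⟨h0, hx⟩
  rcases h with h | h
  · omega
  · rw [List.getElem?_eq_none (by omega)] at hx
    cases hx

lemma card_charFn_ne {α : Type*} [Fintype α] [DecidableEq α] (X : List α) (i : ℤ) :
    (Finset.univ.filter fun c => charFn X c i ≠ 0).card ≤ 1 := by
  apply Finset.card_le_one.2
  intro a ha b hb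
  simp only [Finset.mem_filter, charFn_ne_iff] at ha hb
  exact Option.some_injective _ (ha.2.2.symm.trans hb.2.2)

lemma hamL_eq_finset {α : Type*} [DecidableEq α] (A B : List α) :
    hamL A B = ((Finset.range A.length).filter (fun i => A[i]? ≠ B[i]?)).card := rfl

theorem stmt2 {α : Type*} [Fintype α] [DecidableEq α]
    (X : List α) (ρ d : ℕ) (hρ : 0 < ρ) (hρn : ρ ≤ X.length)
    (hper : isPeriodL X ρ d) :
    ∑ c : α, (Function.support (bdiff (ρ : ℤ) (charFn X c))).ncard ≤ 2 * (d + ρ) := by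
  classical
  set n : ℤ := (X.length : ℤ) with hn
  have hn0 : (0:ℤ) ≤ n := by positivity
  have hρn' : (ρ:ℤ) ≤ n := by rw [hn]; exact_mod_cast hρn
  set I : Finset ℤ := Finset.Ico (0:ℤ) (n + ρ) with hI
  -- support description
  have hsup : ∀ c : α, Function.support (bdiff (ρ : ℤ) (charFn X c)) =
      ↑(I.filter fun i => bdiff (ρ:ℤ) (charFn X c) i ≠ 0) := by
    intro c
    ext i
    simp only [Function.mem_support, Finset.coe_filter, Set.mem_setOf_eq, Finset.mem_Ico, hI]
    refine ⟨fun h => ⟨⟨?_, ?_⟩, h⟩, fun h => h.2⟩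
    · by_contra hi
      push_neg at hi
      rw [show bdiff (ρ:ℤ) (charFn X c) i = charFn X c i - charFn X c (i - ρ) from rfl,
        charFn_eq_zero X c i (Or.inl (by omega)),
        charFn_eq_zero X c (i - ρ) (Or.inl (by omega))] at h
      exact h (by ring)
    · by_contra hi
      push_neg at hi
      rw [show bdiff (ρ:ℤ) (charFn X c) i = charFn X c i - charFn X c (i - ρ) from rfl,
        charFn_eq_zero X c i (Or.inr (by omega)),
        charFn_eq_zero X c (i - ρ) (Or.inr (by omega))] at h
      exact h (by ring)
  -- g bound: generic ≤ 2
  have hsub2 : ∀ i : ℤ, (Finset.univ.filter fun c : α => bdiff (ρ:ℤ) (charFn X c) i ≠ 0) ⊆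
      (Finset.univ.filter fun c : α => charFn X c i ≠ 0) ∪
      (Finset.univ.filter fun c : α => charFn X c (i - ρ) ≠ 0) := by
    intro i c hc
    simp only [Finset.mem_filter, Finset.mem_union, Finset.mem_univ, true_and] at *
    by_contra h
    push_neg at h
    rw [show bdiff (ρ:ℤ) (charFn X c) i = charFn X c i - charFn X c (i - ρ) from rfl,
      h.1, h.2] at hc
    exact hc (by ring)
  have g2 : ∀ i : ℤ, (Finset.univ.filter fun c : α => bdiff (ρ:ℤ) (charFn X c) i ≠ 0).card ≤ 2 := by
    intro i
    calc (Finset.univ.filter fun c : α => bdiff (ρ:ℤ) (charFn X c) i ≠ 0).card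
        ≤ ((Finset.univ.filter fun c : α => charFn X c i ≠ 0) ∪
           (Finset.univ.filter fun c : α => charFn X c (i - ρ) ≠ 0)).card :=
          Finset.card_le_card (hsub2 i)
      _ ≤ _ + _ := Finset.card_union_le _ _
      _ ≤ 1 + 1 := Nat.add_le_add (card_charFn_ne X i) (card_charFn_ne X (i - ρ))
  -- g ≤ 1 when left end (i < ρ)
  have g1l : ∀ i : ℤ, i < ρ →
      (Finset.univ.filter fun c : α => bdiff (ρ:ℤ) (charFn X c) i ≠ 0).card ≤ 1 := by
    intro i hi
    refine le_trans (Finset.card_le_card ?_) (card_charFn_ne X i)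
    intro c hc
    simp only [Finset.mem_filter, Finset.mem_univ, true_and] at *
    intro h0
    rw [show bdiff (ρ:ℤ) (charFn X c) i = charFn X c i - charFn X c (i - ρ) from rfl,
      h0, charFn_eq_zero X c (i - ρ) (Or.inl (by omega))] at hc
    exact hc (by ring)
  -- g ≤ 1 when right end (i ≥ n)
  have g1r : ∀ i : ℤ, n ≤ i →
      (Finset.univ.filter fun c : α => bdiff (ρ:ℤ) (charFn X c) i ≠ 0).card ≤ 1 := by
    intro i hi
    refine le_trans (Finset.card_le_card ?_) (card_charFn_ne X (i - ρ))
    intro c hc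
    simp only [Finset.mem_filter, Finset.mem_univ, true_and] at *
    intro h0
    rw [show bdiff (ρ:ℤ) (charFn X c) i = charFn X c i - charFn X c (i - ρ) from rfl,
      h0, charFn_eq_zero X c i (Or.inr hi)] at hc
    exact hc (by ring)
  -- g = 0 on matching middle positions
  have g0 : ∀ i : ℤ, (ρ:ℤ) ≤ i → i < n → X[i.toNat]? = X[(i - ρ).toNat]? →
      (Finset.univ.filter fun c : α => bdiff (ρ:ℤ) (charFn X c) i ≠ 0).card = 0 := by
    intro i h1 h2 hmatch
    rw [Finset.card_eq_zero]
    ext c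
    simp only [Finset.mem_filter, Finset.mem_univ, true_and, Finset.notMem_empty, iff_false,
      not_not]
    rw [show bdiff (ρ:ℤ) (charFn X c) i = charFn X c i - charFn X c (i - ρ) from rfl]
    have : charFn X c i = charFn X c (i - ρ) := by
      unfold charFn
      rw [hmatch]
      congr 1
      simp only [eq_iff_iff, and_congr_left_iff]
      intro _
      constructor <;> intro <;> omega
    rw [this, sub_self]
  -- middle sum bound via hamming
  set M : Finset ℤ := (Finset.Ico (ρ:ℤ) n).filter
    (fun i => X[i.toNat]? ≠ X[(i - ρ).toNat]?) with hM
  have hMcard : M.card ≤ d := by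
    have hper' : hamL (X.take (X.length - ρ)) (X.drop ρ) ≤ d := hper
    refine le_trans ?_ hper'
    rw [hamL_eq_finset]
    apply Finset.card_le_card_of_injOn (fun i : ℤ => (i - (ρ:ℤ)).toNat)
    · intro i hi
      simp only [hM, Finset.mem_coe, Finset.mem_filter, Finset.mem_Ico] at hi
      obtain ⟨⟨hi1, hi2⟩, hne⟩ := hi
      simp only [Finset.mem_coe, Finset.mem_filter, Finset.mem_range]
      constructor
      · rw [List.length_take]
        omega
      · rw [List.getElem?_take_of_lt (by omega), List.getElem?_drop]
        rw [show ρ + (i - ρ).toNat = i.toNat by omega]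
        exact fun h => hne h.symm
    · intro a ha b hb hab
      simp only [hM, Finset.mem_filter, Finset.mem_Ico, Finset.coe_filter, Set.mem_setOf_eq] at ha hb
      simp only at hab
      omega
  -- main computation
  calc ∑ c : α, (Function.support (bdiff (ρ:ℤ) (charFn X c))).ncard
      = ∑ c : α, (I.filter fun i => bdiff (ρ:ℤ) (charFn X c) i ≠ 0).card := by
        refine Finset.sum_congr rfl fun c _ => ?_
        rw [hsup c, Set.ncard_coe_finset]
    _ = ∑ i ∈ I, (Finset.univ.filter fun c : α => bdiff (ρ:ℤ) (charFn X c) i ≠ 0).card := by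
        simp_rw [Finset.card_filter]
        rw [Finset.sum_comm]
    _ = (∑ i ∈ Finset.Ico (0:ℤ) ρ, (Finset.univ.filter fun c : α => bdiff (ρ:ℤ) (charFn X c) i ≠ 0).card)
        + (∑ i ∈ Finset.Ico (ρ:ℤ) n, (Finset.univ.filter fun c : α => bdiff (ρ:ℤ) (charFn X c) i ≠ 0).card)
        + (∑ i ∈ Finset.Ico n (n + ρ), (Finset.univ.filter fun c : α => bdiff (ρ:ℤ) (charFn X c) i ≠ 0).card) := by
        rw [hI, ← Finset.Ico_union_Ico_eq_Ico (show (0:ℤ) ≤ n by omega) (show n ≤ n + ρ by omega),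
          Finset.sum_union (Finset.Ico_disjoint_Ico_consecutive 0 n (n + ρ)),
          ← Finset.Ico_union_Ico_eq_Ico (show (0:ℤ) ≤ (ρ:ℤ) by omega) hρn',
          Finset.sum_union (Finset.Ico_disjoint_Ico_consecutive 0 (ρ:ℤ) n)]
    _ ≤ ρ + 2 * d + ρ := by
        gcongr ?_ + ?_ + ?_
        · calc ∑ i ∈ Finset.Ico (0:ℤ) (ρ:ℤ), (Finset.univ.filter fun c : α => bdiff (ρ:ℤ) (charFn X c) i ≠ 0).card
              ≤ ∑ _i ∈ Finset.Ico (0:ℤ) (ρ:ℤ), 1 :=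
                Finset.sum_le_sum fun i hi => g1l i (Finset.mem_Ico.1 hi).2
            _ = ρ := by
                rw [Finset.sum_const, smul_eq_mul, mul_one, Int.card_Ico]
                omega
        · calc ∑ i ∈ Finset.Ico (ρ:ℤ) n, (Finset.univ.filter fun c : α => bdiff (ρ:ℤ) (charFn X c) i ≠ 0).card
              = ∑ i ∈ M, (Finset.univ.filter fun c : α => bdiff (ρ:ℤ) (charFn X c) i ≠ 0).card := by
                rw [hM]
                refine (Finset.sum_filter_of_ne ?_).symm
                intro i hi hne
                obtain ⟨h1, h2⟩ := Finset.mem_Ico.1 hi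
                intro heq
                exact hne (g0 i h1 h2 heq)
            _ ≤ ∑ _i ∈ M, 2 := Finset.sum_le_sum fun i _ => g2 i
            _ = 2 * M.card := by rw [Finset.sum_const, smul_eq_mul, mul_comm]
            _ ≤ 2 * d := by omega
        · calc ∑ i ∈ Finset.Ico n (n + ρ), (Finset.univ.filter fun c : α => bdiff (ρ:ℤ) (charFn X c) i ≠ 0).card
              ≤ ∑ _i ∈ Finset.Ico n (n + ρ), 1 :=
                Finset.sum_le_sum fun i hi => g1r i (Finset.mem_Ico.1 hi).1
            _ = ρ := by
                rw [Finset.sum_const, smul_eq_mul, mul_one, Int.card_Ico]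
                omega
    _ = 2 * (d + ρ) := by ring
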